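/- Let p_n be the number of elements of F₂ of word length at most n that are NOT the identity and NOT conjugate to any power of α, β, or αβ, and let h_n be the number of all elements of word length at most n. Then p_n / h_n → 1 as n → ∞. -/

import Mathlib

abbrev F2 := FreeGroup (Fin 2)

def α : F2 := FreeGroup.of 0

def β : F2 := FreeGroup.of 1

/-- Number of pseudo-Anosov-type elements (nontrivial, not conjugate to a power of
`α`, `β`, or `αβ`) of word length at most `n`. -/
noncomputable def pABall (n : ℕ) : ℕ :=
  Nat.card {g : F2 | FreeGroup.norm g ≤ n ∧ g ≠ 1 ∧
    ¬ ∃ (w : F2) (k : ℤ) (γ : F2), γ ∈ ({α, β, α * β} : Set F2) ∧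
      g = w * γ ^ k * w⁻¹}

/-- Number of all elements of word length at most `n`. -/
noncomputable def ball (n : ℕ) : ℕ :=
  Nat.card {g : F2 | FreeGroup.norm g ≤ n}


open FreeGroup List Filter


abbrev Ltr := Fin 2 × Bool

def Reduced (L : List Ltr) : Prop :=
  List.IsChain (fun p q => ¬(p.1 = q.1 ∧ p.2 = !q.2)) L

lemma reduce_eq_self_of {L : List Ltr} (h : Reduced L) : FreeGroup.reduce L = L := by
  induction L with
  | nil => rfl
  | cons x t ih =>
    rcases t with _ | ⟨y, t⟩
    · rfl
    · rw [Reduced, List.isChain_cons_cons] at h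
      rw [FreeGroup.reduce.cons, ih h.2]
      simp only [if_neg h.1]

lemma not_chain'_decomp {α : Type*} {R : α → α → Prop} {M : List α} (h : ¬ List.IsChain R M) :
    ∃ M₁ x y M₂, M = M₁ ++ x :: y :: M₂ ∧ ¬ R x y := by
  induction M with
  | nil => exact absurd List.isChain_nil h
  | cons x t ih =>
    rcases t with _ | ⟨y, t⟩
    · exact absurd (List.isChain_singleton x) h
    · rw [List.isChain_cons_cons] at h
      by_cases hxy : R x y
      · obtain ⟨M₁, a, b, M₂, heq, hR⟩ := ih (fun hc => h ⟨hxy, hc⟩)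
        exact ⟨x :: M₁, a, b, M₂, by rw [heq]; rfl, hR⟩
      · exact ⟨[], x, y, t, rfl, hxy⟩

lemma reduced_reduce (L : List Ltr) : Reduced (FreeGroup.reduce L) := by
  by_contra h
  obtain ⟨M₁, x, y, M₂, heq, hR⟩ := not_chain'_decomp h
  push_neg at hR
  obtain ⟨h1, h2⟩ := hR
  have : y = (x.1, !x.2) := by
    obtain ⟨a, b⟩ := x; obtain ⟨c, d⟩ := y
    simp_all
  subst this
  exact FreeGroup.reduce.not (by rw [heq])

lemma reduced_toWord (g : FreeGroup (Fin 2)) : Reduced g.toWord := by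
  have := reduced_reduce g.toWord
  rwa [FreeGroup.reduce_toWord] at this




def pat : Fin 4 → Bool → List Ltr
  | 0, s => [(0, s)]
  | 1, s => [(1, s)]
  | 2, true => [(0, true), (1, true)]
  | 2, false => [(1, false), (0, false)]
  | 3, true => [(1, true), (0, true)]
  | 3, false => [(0, false), (1, false)]

lemma pat_ne_nil (d : Fin 4) (s : Bool) : pat d s ≠ [] := by
  fin_cases d <;> cases s <;> simp [pat]

lemma pat_chain' (d : Fin 4) (s : Bool) :
    List.IsChain (fun p q : Ltr => ¬(p.1 = q.1 ∧ p.2 = !q.2)) (pat d s ++ pat d s) := by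
  fin_cases d <;> cases s <;> simp [pat]

lemma pat_length_pos (d : Fin 4) (s : Bool) : 1 ≤ (pat d s).length := by
  fin_cases d <;> cases s <;> simp [pat]

def cores (d : Fin 4) (s : Bool) (m : ℕ) : List Ltr := (List.replicate m (pat d s)).flatten

lemma cores_reduced (d : Fin 4) (s : Bool) (m : ℕ) : Reduced (cores d s m) := by
  rw [Reduced, cores, List.isChain_flatten (by simp [pat_ne_nil])]
  constructor
  · intro l hl
    rw [List.eq_of_mem_replicate hl]
    exact ((List.isChain_append).1 (pat_chain' d s)).1
  · exact List.isChain_replicate_of_rel m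
      (fun x hx y hy => ((List.isChain_append).1 (pat_chain' d s)).2.2 x hx y hy)

lemma cores_length (d : Fin 4) (s : Bool) (m : ℕ) : (cores d s m).length = m * (pat d s).length := by
  simp [cores]

lemma cores_head? (d : Fin 4) (s : Bool) (m : ℕ) (hm : 1 ≤ m) :
    (cores d s m).head? = (pat d s).head? := by
  obtain ⟨m, rfl⟩ := Nat.exists_eq_add_of_le hm
  rw [cores, add_comm, List.replicate_succ, List.flatten_cons,
    List.head?_append_of_ne_nil _ (pat_ne_nil d s)]

lemma cores_getLast? (d : Fin 4) (s : Bool) (m : ℕ) (hm : 1 ≤ m) :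
    (cores d s m).getLast? = (pat d s).getLast? := by
  obtain ⟨m, rfl⟩ := Nat.exists_eq_add_of_le hm
  rw [cores, add_comm, List.replicate_succ', List.flatten_concat, List.getLast?_append]
  rcases h : (pat d s).getLast? with _ | x
  · exact absurd (List.getLast?_eq_none_iff.1 h) (pat_ne_nil d s)
  · rfl

lemma mk_pat_pow (d : Fin 4) (s : Bool) (m : ℕ) :
    (FreeGroup.mk (pat d s)) ^ m = FreeGroup.mk (cores d s m) :=
  FreeGroup.pow_mk m




lemma reduced_invRev {L : List Ltr} (h : Reduced L) : Reduced (FreeGroup.invRev L) := by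
  have : FreeGroup.reduce (FreeGroup.invRev L) = FreeGroup.invRev L := by
    rw [FreeGroup.reduce_invRev, reduce_eq_self_of h]
  rw [← this]; exact reduced_reduce _

lemma norm_conj_of_nocancel (w : F2) (c : List Ltr) (hc : Reduced c) (hne : c ≠ [])
    (h1 : ∀ ℓ ∈ w.toWord.getLast?, ∀ x ∈ c.head?, ¬(ℓ.1 = x.1 ∧ ℓ.2 = !x.2))
    (h2 : ∀ x ∈ c.getLast?, ∀ ℓ ∈ w.toWord.getLast?, ¬(x.1 = ℓ.1 ∧ x.2 = ℓ.2)) :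
    FreeGroup.norm (w * FreeGroup.mk c * w⁻¹) = 2 * FreeGroup.norm w + c.length := by
  set A := w.toWord with hA
  have hred : Reduced (A ++ (c ++ FreeGroup.invRev A)) := by
    rw [Reduced, List.isChain_append, List.isChain_append]
    refine ⟨reduced_toWord w, ⟨hc, reduced_invRev (reduced_toWord w), ?_⟩, ?_⟩
    · -- junction between c and invRev A
      intro x hx y hy
      rw [FreeGroup.invRev, List.head?_reverse, List.getLast?_map] at hy
      rcases Option.map_eq_some_iff.1 hy with ⟨ℓ, hℓ, rfl⟩
      intro ⟨e1, e2⟩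
      exact h2 x hx ℓ hℓ ⟨e1, by simpa using e2⟩
    · -- junction between A and c ++ invRev A
      intro ℓ hℓ y hy
      rw [List.head?_append_of_ne_nil _ hne] at hy
      exact h1 ℓ hℓ y hy
  have hmk : w * FreeGroup.mk c * w⁻¹ = FreeGroup.mk (A ++ (c ++ FreeGroup.invRev A)) := by
    conv_lhs => rw [← FreeGroup.mk_toWord (x := w)]
    rw [FreeGroup.inv_mk, FreeGroup.mul_mk, FreeGroup.mul_mk, List.append_assoc]
  rw [hmk]
  show (FreeGroup.reduce _).length = _
  rw [reduce_eq_self_of hred]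
  simp [FreeGroup.invRev_length, FreeGroup.norm]
  ring

lemma conj_step (d : Fin 4) (s : Bool) (ℓ : Ltr)
    (h : (∃ x ∈ (pat d s).head?, ℓ = (x.1, !x.2)) ∨ (∃ x ∈ (pat d s).getLast?, ℓ = x)) :
    ∃ d' : Fin 4, FreeGroup.mk [ℓ] * FreeGroup.mk (pat d s) * (FreeGroup.mk [ℓ])⁻¹
      = FreeGroup.mk (pat d' s) := by
  have key : ∀ (d : Fin 4) (s : Bool) (ℓ : Ltr),
      ((∃ x ∈ (pat d s).head?, ℓ = (x.1, !x.2)) ∨ (∃ x ∈ (pat d s).getLast?, ℓ = x)) →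
      ∃ d' : Fin 4, FreeGroup.reduce (ℓ :: (pat d s ++ FreeGroup.invRev [ℓ]))
        = FreeGroup.reduce (pat d' s) := by decide
  obtain ⟨d', hd'⟩ := key d s ℓ h
  refine ⟨d', ?_⟩
  rw [FreeGroup.inv_mk, FreeGroup.mul_mk, FreeGroup.mul_mk]
  exact FreeGroup.reduce.exact (by simpa using hd')




lemma key_nocancel (w : F2) (d : Fin 4) (s : Bool) (m : ℕ) (hm : 1 ≤ m)
    (h : ∀ ℓ ∈ w.toWord.getLast?,
      ¬((∃ x ∈ (pat d s).head?, ℓ = (x.1, !x.2)) ∨ (∃ x ∈ (pat d s).getLast?, ℓ = x))) :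
    2 * FreeGroup.norm w + m ≤ FreeGroup.norm (w * (FreeGroup.mk (pat d s)) ^ m * w⁻¹) := by
  rw [mk_pat_pow]
  have hcne : cores d s m ≠ [] := by
    apply List.ne_nil_of_length_pos
    rw [cores_length]
    exact Nat.mul_pos hm (pat_length_pos d s)
  have hval := norm_conj_of_nocancel w (cores d s m) (cores_reduced d s m) hcne
    (by
      intro ℓ hℓ x hx hbad
      rw [cores_head? d s m hm] at hx
      exact h ℓ hℓ (Or.inl ⟨x, hx, Prod.ext hbad.1 hbad.2⟩))
    (by
      intro x hx ℓ hℓ hbad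
      rw [cores_getLast? d s m hm] at hx
      exact h ℓ hℓ (Or.inr ⟨x, hx, Prod.ext hbad.1.symm hbad.2.symm⟩))
  rw [hval, cores_length]
  have : m ≤ m * (pat d s).length := Nat.le_mul_of_pos_right m (pat_length_pos d s)
  omega

lemma key (N : ℕ) : ∀ (w : F2), FreeGroup.norm w ≤ N → ∀ (d : Fin 4) (s : Bool) (m : ℕ),
    1 ≤ m →
    ∃ (u : F2) (d' : Fin 4),
      w * (FreeGroup.mk (pat d s)) ^ m * w⁻¹ = u * (FreeGroup.mk (pat d' s)) ^ m * u⁻¹ ∧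
      2 * FreeGroup.norm u + m ≤ FreeGroup.norm (w * (FreeGroup.mk (pat d s)) ^ m * w⁻¹) := by
  induction N with
  | zero =>
    intro w hw d s m hm
    refine ⟨w, d, rfl, key_nocancel w d s m hm ?_⟩
    have : w.toWord = [] := by
      have := hw
      rw [FreeGroup.norm] at this
      exact List.eq_nil_of_length_eq_zero (Nat.le_zero.1 this)
    rw [this]; simp
  | succ N ih =>
    intro w hw d s m hm
    rcases hL : w.toWord.getLast? with _ | ℓ
    · refine ⟨w, d, rfl, key_nocancel w d s m hm ?_⟩
      rw [hL]; simp
    · by_cases hcan : (∃ x ∈ (pat d s).head?, ℓ = (x.1, !x.2)) ∨ (∃ x ∈ (pat d s).getLast?, ℓ = x)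
      · obtain ⟨d2, hd2⟩ := conj_step d s ℓ hcan
        set w' := FreeGroup.mk w.toWord.dropLast with hw'
        have hw'word : w'.toWord = w.toWord.dropLast :=
          reduce_eq_self_of (List.IsChain.prefix (reduced_toWord w) (List.dropLast_prefix _))
        have hsplit : w = w' * FreeGroup.mk [ℓ] := by
          rw [hw', FreeGroup.mul_mk, List.dropLast_append_getLast? ℓ hL, FreeGroup.mk_toWord]
        have hne : w.toWord ≠ [] := by
          intro hnil; rw [hnil] at hL; simp at hL
        have hnorm' : FreeGroup.norm w' + 1 ≤ FreeGroup.norm w := by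
          show w'.toWord.length + 1 ≤ w.toWord.length
          rw [hw'word, List.length_dropLast]
          have := List.length_pos_iff.2 hne
          omega
        have geq : w * (FreeGroup.mk (pat d s)) ^ m * w⁻¹
            = w' * (FreeGroup.mk (pat d2 s)) ^ m * w'⁻¹ := by
          rw [hsplit, ← hd2, conj_pow]
          group
        obtain ⟨u, d', h1, h2⟩ := ih w' (by omega) d2 s m hm
        exact ⟨u, d', geq.trans h1, by rw [geq]; exact h2⟩
      · refine ⟨w, d, rfl, key_nocancel w d s m hm ?_⟩
        intro ℓ' hℓ'
        rw [hL, Option.mem_some_iff] at hℓ'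
        rw [← hℓ']
        exact hcan




def ballSet (n : ℕ) : Set F2 := {g | FreeGroup.norm g ≤ n}

lemma ballSet_finite (n : ℕ) : (ballSet n).Finite := by
  have h : ballSet n ⊆ FreeGroup.toWord ⁻¹' {l : List Ltr | l.length ≤ n} := fun g hg => hg
  exact Set.Finite.subset ((List.finite_length_le Ltr n).preimage
    FreeGroup.toWord_injective.injOn) h

-- decoding table
def invL (x : Ltr) : Ltr := (x.1, !x.2)
def allL : List Ltr := [(0, true), (0, false), (1, true), (1, false)]
def decF (x : Ltr) (i : Fin 3) : Ltr := (allL.filter (fun y => y ≠ invL x)).getD i (0, true)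
def codeF (x y : Ltr) : Fin 3 := if y = decF x 0 then 0 else if y = decF x 1 then 1 else 2

lemma dec_code : ∀ x y : Ltr, ¬(x.1 = y.1 ∧ x.2 = !y.2) → decF x (codeF x y) = y := by decide

def encL : List Ltr → List (Fin 3)
  | [] => []
  | [_] => []
  | x :: y :: t => codeF x y :: encL (y :: t)

def buildL : Ltr → List (Fin 3) → List Ltr
  | x, [] => [x]
  | x, c :: cs => x :: buildL (decF x c) cs

lemma build_enc : ∀ (t : List Ltr) (x : Ltr), Reduced (x :: t) →
    buildL x (encL (x :: t)) = x :: t := by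
  intro t
  induction t with
  | nil => intro x _; rfl
  | cons y t ih =>
    intro x hred
    rw [Reduced, List.isChain_cons_cons] at hred
    show buildL x (codeF x y :: encL (y :: t)) = x :: y :: t
    rw [buildL, dec_code x y hred.1, ih y hred.2]

lemma encL_length : ∀ L : List Ltr, (encL L).length = L.length - 1
  | [] => rfl
  | [_] => rfl
  | x :: y :: t => by
    show (codeF x y :: encL (y :: t)).length = (y :: t).length
    rw [List.length_cons, encL_length (y :: t)]
    simp

noncomputable def G (m : ℕ) (g : F2) : Option (Ltr × Fin (m + 1) × (Fin m → Fin 3)) :=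
  match FreeGroup.toWord g with
  | [] => none
  | x :: _ => some (x, ⟨min (encL g.toWord).length m, Nat.lt_succ_of_le (min_le_right _ _)⟩,
      fun i => (encL g.toWord).getD i 0)

lemma G_injOn (m : ℕ) : Set.InjOn (G m) (ballSet m) := by
  intro g1 hg1 g2 hg2 heq
  rcases h1 : g1.toWord with _ | ⟨x1, t1⟩ <;> rcases h2 : g2.toWord with _ | ⟨x2, t2⟩
  · exact FreeGroup.toWord_injective (h1.trans h2.symm)
  · simp only [G, h1, h2] at heq; cases heq
  · simp only [G, h1, h2] at heq; cases heq
  · simp only [G, h1, h2, Option.some_inj, Prod.mk.injEq, Fin.mk.injEq] at heq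
    obtain ⟨hx, hmin, hfun⟩ := heq
    have hlen1 : (encL (x1 :: t1)).length ≤ m := by
      have hh : (x1 :: t1).length ≤ m := by rw [← h1]; exact hg1
      rw [encL_length]; omega
    have hlen2 : (encL (x2 :: t2)).length ≤ m := by
      have hh : (x2 :: t2).length ≤ m := by rw [← h2]; exact hg2
      rw [encL_length]; omega
    rw [min_eq_left hlen1, min_eq_left hlen2] at hmin
    have hencs : encL (x1 :: t1) = encL (x2 :: t2) := by
      apply List.ext_getElem hmin
      intro i hi1 hi2
      have := congrFun hfun ⟨i, lt_of_lt_of_le hi1 hlen1⟩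
      simpa [List.getD_eq_getElem?_getD, List.getElem?_eq_getElem, hi1, hi2] using this
    apply FreeGroup.toWord_injective
    rw [h1, h2]
    have b1 := build_enc t1 x1 (h1 ▸ reduced_toWord g1)
    have b2 := build_enc t2 x2 (h2 ▸ reduced_toWord g2)
    rw [← b1, ← b2, hencs, hx]

lemma ball_upper (m : ℕ) : Nat.card (ballSet m) ≤ 1 + 4 * ((m + 1) * 3 ^ m) := by
  rw [Nat.card_coe_set_eq]
  calc (ballSet m).ncard ≤ (Set.univ : Set (Option (Ltr × Fin (m + 1) × (Fin m → Fin 3)))).ncard :=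
        Set.ncard_le_ncard_of_injOn (G m) (fun a _ => trivial) (G_injOn m) Set.finite_univ
    _ = Nat.card (Option (Ltr × Fin (m + 1) × (Fin m → Fin 3))) := Set.ncard_univ _
    _ ≤ 1 + 4 * ((m + 1) * 3 ^ m) := by
        rw [Nat.card_eq_fintype_card]
        simp [Fintype.card_option, Fintype.card_prod, Fintype.card_fun]

lemma reduced_of_true : ∀ L : List Ltr, (∀ p ∈ L, p.2 = true) → Reduced L := by
  intro L
  induction L with
  | nil => intro; exact List.isChain_nil
  | cons x t ih =>
    intro h
    rcases t with _ | ⟨y, t⟩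
    · exact List.isChain_singleton x
    · rw [Reduced, List.isChain_cons_cons]
      refine ⟨?_, ih (fun p hp => h p (List.mem_cons_of_mem x hp))⟩
      have hx : x.2 = true := h x (by simp)
      have hy : y.2 = true := h y (by simp)
      rw [hx, hy]
      simp

lemma toWord_ofFn (v : Fin n → Fin 2) :
    (FreeGroup.mk (List.ofFn fun i => ((v i : Fin 2), true))).toWord
      = List.ofFn fun i => ((v i : Fin 2), true) := by
  show FreeGroup.reduce _ = _
  apply reduce_eq_self_of
  apply reduced_of_true
  intro p hp
  obtain ⟨i, hi⟩ := List.mem_ofFn.1 hp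
  rw [← hi]

lemma ball_lower (n : ℕ) : 2 ^ n ≤ Nat.card (ballSet n) := by
  haveI : Finite (ballSet n) := (ballSet_finite n).to_subtype
  have hinj : Function.Injective
      (fun v : Fin n → Fin 2 => (⟨FreeGroup.mk (List.ofFn fun i => ((v i : Fin 2), true)),
        by
          show FreeGroup.norm _ ≤ n
          show (FreeGroup.toWord _).length ≤ n
          rw [toWord_ofFn]
          simp⟩ : ballSet n)) := by
    intro v1 v2 h
    have hval : FreeGroup.mk (List.ofFn fun i => ((v1 i : Fin 2), true))
        = FreeGroup.mk (List.ofFn fun i => ((v2 i : Fin 2), true)) := congrArg Subtype.val h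
    have h2 : (List.ofFn fun i => ((v1 i : Fin 2), true))
        = List.ofFn fun i => ((v2 i : Fin 2), true) := by
      rw [← toWord_ofFn v1, ← toWord_ofFn v2, hval]
    have h3 := List.ofFn_injective h2
    funext i
    exact (Prod.ext_iff.1 (congrFun h3 i)).1
  calc 2 ^ n = Nat.card (Fin n → Fin 2) := by
        rw [Nat.card_eq_fintype_card]; simp
    _ ≤ Nat.card (ballSet n) := Nat.card_le_card_of_injective _ hinj



lemma alpha_eq : α = FreeGroup.mk (pat 0 true) := rfl
lemma beta_eq : β = FreeGroup.mk (pat 1 true) := rfl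
lemma alphabeta_eq : α * β = FreeGroup.mk (pat 2 true) := by
  rw [alpha_eq, beta_eq, FreeGroup.mul_mk]; rfl
lemma alpha_inv_eq : α⁻¹ = FreeGroup.mk (pat 0 false) := by
  rw [alpha_eq, FreeGroup.inv_mk]; rfl
lemma beta_inv_eq : β⁻¹ = FreeGroup.mk (pat 1 false) := by
  rw [beta_eq, FreeGroup.inv_mk]; rfl
lemma alphabeta_inv_eq : (α * β)⁻¹ = FreeGroup.mk (pat 2 false) := by
  rw [alphabeta_eq, FreeGroup.inv_mk]; rfl

lemma entry (γ : F2) (hγ : γ ∈ ({α, β, α * β} : Set F2)) (k : ℤ) :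
    ∃ (d : Fin 4) (s : Bool), γ ^ k = (FreeGroup.mk (pat d s)) ^ k.natAbs := by
  have main : ∀ (x : F2) (d : Fin 4), x = FreeGroup.mk (pat d true) →
      x⁻¹ = FreeGroup.mk (pat d false) →
      ∃ (d' : Fin 4) (s : Bool), x ^ k = (FreeGroup.mk (pat d' s)) ^ k.natAbs := by
    intro x d hx hxinv
    rcases Int.natAbs_eq k with hk | hk
    · refine ⟨d, true, ?_⟩
      conv_lhs => rw [hk]
      rw [zpow_natCast, hx]
    · refine ⟨d, false, ?_⟩
      conv_lhs => rw [hk]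
      rw [zpow_neg, zpow_natCast, ← inv_pow, hxinv]
  rcases hγ with h | h | h
  · exact h ▸ main α 0 alpha_eq alpha_inv_eq
  · exact h ▸ main β 1 beta_eq beta_inv_eq
  · exact h ▸ main (α * β) 2 alphabeta_eq alphabeta_inv_eq



def badSet (n : ℕ) : Set F2 :=
  {g | FreeGroup.norm g ≤ n ∧ ∃ (w : F2) (k : ℤ) (γ : F2),
    γ ∈ ({α, β, α * β} : Set F2) ∧ g = w * γ ^ k * w⁻¹}

noncomputable def badF (n : ℕ) (t : ballSet (n / 2) × Fin 4 × Bool × Fin (n + 1)) : F2 :=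
  (t.1 : F2) * (FreeGroup.mk (pat t.2.1 t.2.2.1)) ^ (t.2.2.2 : ℕ) * (t.1 : F2)⁻¹

lemma one_mem_ballSet (m : ℕ) : (1 : F2) ∈ ballSet m := by
  show FreeGroup.norm 1 ≤ m
  simp [FreeGroup.norm_one]

lemma bad_subset (n : ℕ) : badSet n ⊆ Set.range (badF n) := by
  rintro g ⟨hgn, w, k, γ, hγ, rfl⟩
  obtain ⟨d, s, hds⟩ := entry γ hγ k
  rw [hds]
  set m := k.natAbs with hm
  rcases Nat.eq_zero_or_pos m with hm0 | hm1
  · refine ⟨⟨⟨1, one_mem_ballSet _⟩, d, s, ⟨0, by omega⟩⟩, ?_⟩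
    show (1 : F2) * _ ^ (0 : ℕ) * (1 : F2)⁻¹ = _
    rw [hm0]
    simp
  · obtain ⟨u, d', heq, hbound⟩ := key (FreeGroup.norm w) w le_rfl d s m hm1
    rw [hds] at hgn
    have hun : FreeGroup.norm u ≤ n / 2 := by
      rw [Nat.le_div_iff_mul_le (by norm_num)]
      omega
    refine ⟨⟨⟨u, hun⟩, d', s, ⟨m, by omega⟩⟩, ?_⟩
    show u * _ ^ m * u⁻¹ = _
    exact heq.symm

lemma bad_card (n : ℕ) : Nat.card (badSet n) ≤ Nat.card (ballSet (n / 2)) * (8 * (n + 1)) := by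
  haveI : Finite (ballSet (n / 2)) := (ballSet_finite _).to_subtype
  calc Nat.card (badSet n) = (badSet n).ncard := Nat.card_coe_set_eq _
    _ ≤ (Set.range (badF n)).ncard :=
        Set.ncard_le_ncard (bad_subset n) (Set.finite_range _)
    _ ≤ Nat.card (ballSet (n / 2) × Fin 4 × Bool × Fin (n + 1)) := by
        rw [← Set.image_univ]
        calc ((badF n) '' Set.univ).ncard ≤ (Set.univ : Set _).ncard := Set.ncard_image_le
              Set.finite_univ
          _ = _ := Set.ncard_univ _
    _ = Nat.card (ballSet (n / 2)) * (8 * (n + 1)) := by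
        rw [Nat.card_prod, Nat.card_prod, Nat.card_prod, Nat.card_eq_fintype_card (α := Fin 4),
          Nat.card_eq_fintype_card (α := Bool), Nat.card_eq_fintype_card (α := Fin (n + 1))]
        simp only [Fintype.card_fin, Fintype.card_bool]
        ring



lemma ballCard_eq (n : ℕ) : ball n = Nat.card (ballSet n) := rfl

lemma paSet_eq (n : ℕ) :
    {g : F2 | FreeGroup.norm g ≤ n ∧ g ≠ 1 ∧
      ¬ ∃ (w : F2) (k : ℤ) (γ : F2), γ ∈ ({α, β, α * β} : Set F2) ∧
        g = w * γ ^ k * w⁻¹} = ballSet n \ badSet n := by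
  ext g
  simp only [Set.mem_setOf_eq, Set.mem_diff, badSet, ballSet]
  constructor
  · rintro ⟨h1, _, h3⟩
    exact ⟨h1, fun h => h3 h.2⟩
  · rintro ⟨h1, h2⟩
    refine ⟨h1, ?_, fun he => h2 ⟨h1, he⟩⟩
    rintro rfl
    exact h2 ⟨h1, 1, 0, α, by simp, by simp⟩

lemma badSet_subset (n : ℕ) : badSet n ⊆ ballSet n := fun _ hg => hg.1

lemma pABall_eq (n : ℕ) : pABall n = ball n - Nat.card (badSet n) := by
  rw [pABall, paSet_eq, ballCard_eq, Nat.card_coe_set_eq, Nat.card_coe_set_eq,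
    Nat.card_coe_set_eq, Set.ncard_diff (badSet_subset n)
      ((ballSet_finite n).subset (badSet_subset n))]

lemma bad_le_ball (n : ℕ) : Nat.card (badSet n) ≤ ball n := by
  rw [ballCard_eq]
  exact Nat.card_mono (ballSet_finite n) (badSet_subset n)

lemma bad_poly (n : ℕ) : Nat.card (badSet n) ≤ 40 * (n + 1) ^ 2 * 3 ^ (n / 2) := by
  have h1 := bad_card n
  have h2 := ball_upper (n / 2)
  have hq : n / 2 + 1 ≤ n + 1 := by omega
  have hc : 1 ≤ 3 ^ (n / 2) := Nat.one_le_pow _ _ (by norm_num)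
  calc Nat.card (badSet n) ≤ (1 + 4 * ((n / 2 + 1) * 3 ^ (n / 2))) * (8 * (n + 1)) := by
        calc Nat.card (badSet n) ≤ Nat.card (ballSet (n / 2)) * (8 * (n + 1)) := h1
          _ ≤ _ := Nat.mul_le_mul_right _ h2
    _ ≤ (5 * ((n + 1) * 3 ^ (n / 2))) * (8 * (n + 1)) := by
        apply Nat.mul_le_mul_right
        have e1 : (n / 2 + 1) * 3 ^ (n / 2) ≤ (n + 1) * 3 ^ (n / 2) :=
          Nat.mul_le_mul_right _ hq
        have e2 : 1 ≤ (n + 1) * 3 ^ (n / 2) := Nat.one_le_iff_ne_zero.2 (by positivity)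
        omega
    _ = 40 * (n + 1) ^ 2 * 3 ^ (n / 2) := by ring


/-- Almost every element is pseudo-Anosov: the proportion of pseudo-Anosov-type
elements in the ball of radius `n` tends to `1` as `n → ∞`. -/
theorem pseudoAnosov_proportion_tendsto_one :
    Filter.Tendsto (fun n => (pABall n : ℝ) / (ball n : ℝ))
      Filter.atTop (nhds 1) := by
  have hballpos : ∀ n : ℕ, (0 : ℝ) < (ball n : ℝ) := by
    intro n
    have := ball_lower n
    rw [← ballCard_eq] at this
    have : (2 : ℕ) ^ n ≤ ball n := this
    exact_mod_cast lt_of_lt_of_le (by positivity) (Nat.cast_le.2 this)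
  have hratio : ∀ n : ℕ, (pABall n : ℝ) / (ball n : ℝ)
      = 1 - (Nat.card (badSet n) : ℝ) / (ball n : ℝ) := by
    intro n
    rw [pABall_eq n, Nat.cast_sub (bad_le_ball n), sub_div, div_self (hballpos n).ne']
  -- the dominating sequence
  set c : ℝ := 2 / Real.sqrt 3 with hc
  have hs3 : (0 : ℝ) < Real.sqrt 3 := Real.sqrt_pos.2 (by norm_num)
  have hs3lt : Real.sqrt 3 < 2 := by
    rw [show (2 : ℝ) = Real.sqrt 4 by
      rw [show (4 : ℝ) = 2 ^ 2 by norm_num, Real.sqrt_sq (by norm_num)]]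
    exact Real.sqrt_lt_sqrt (by norm_num) (by norm_num)
  have hcgt : 1 < c := (one_lt_div hs3).2 hs3lt
  have hcpos : 0 < c := lt_trans one_pos hcgt
  have hbound : ∀ n : ℕ, (Nat.card (badSet n) : ℝ) / (ball n : ℝ)
      ≤ 40 * ((n : ℝ) + 1) ^ 2 / c ^ n := by
    intro n
    have hnum : (Nat.card (badSet n) : ℝ) ≤ 40 * ((n : ℝ) + 1) ^ 2 * Real.sqrt 3 ^ n := by
      calc (Nat.card (badSet n) : ℝ) ≤ ((40 * (n + 1) ^ 2 * 3 ^ (n / 2) : ℕ) : ℝ) :=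
            Nat.cast_le.2 (bad_poly n)
        _ = 40 * ((n : ℝ) + 1) ^ 2 * (3 : ℝ) ^ (n / 2 : ℕ) := by push_cast; ring
        _ ≤ 40 * ((n : ℝ) + 1) ^ 2 * Real.sqrt 3 ^ n := by
            apply mul_le_mul_of_nonneg_left _ (by positivity)
            have h3 : (3 : ℝ) ^ (n / 2 : ℕ) = Real.sqrt 3 ^ (2 * (n / 2)) := by
              rw [pow_mul, Real.sq_sqrt (by norm_num : (3:ℝ) ≥ 0)]
            rw [h3]
            exact pow_le_pow_right₀ (Real.one_le_sqrt.2 (by norm_num)) (by omega)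
    have hden : (2 : ℝ) ^ n ≤ (ball n : ℝ) := by
      have := ball_lower n
      rw [← ballCard_eq] at this
      exact_mod_cast Nat.cast_le.2 this
    have key : (Nat.card (badSet n) : ℝ) / (ball n : ℝ)
        ≤ (40 * ((n : ℝ) + 1) ^ 2 * Real.sqrt 3 ^ n) / (2 : ℝ) ^ n :=
      div_le_div₀ (by positivity) hnum (by positivity) hden
    refine key.trans (le_of_eq ?_)
    rw [hc, div_pow, div_div_eq_mul_div]
  have htend0 : Tendsto (fun n : ℕ => (Nat.card (badSet n) : ℝ) / (ball n : ℝ)) atTop (nhds 0) := by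
    have hb : Tendsto (fun n : ℕ => 40 * ((n : ℝ) + 1) ^ 2 / c ^ n) atTop (nhds 0) := by
      have h1 := tendsto_pow_const_div_const_pow_of_one_lt 2 hcgt
      have h2 : Tendsto (fun n : ℕ => ((n + 1 : ℕ) : ℝ) ^ 2 / c ^ (n + 1)) atTop (nhds 0) :=
        (tendsto_add_atTop_iff_nat 1).2 h1
      have h3 := h2.const_mul (40 * c)
      rw [mul_zero] at h3
      apply h3.congr
      intro n
      push_cast
      rw [pow_succ]
      field_simp
      ring
    apply tendsto_of_tendsto_of_tendsto_of_le_of_le tendsto_const_nhds hb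
    · intro n
      positivity
    · exact hbound
  have := htend0.const_sub (1 : ℝ)
  rw [sub_zero] at this
  apply this.congr
  intro n
  exact (hratio n).symm
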